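/- For every integer t ≥ 4, the signed graph (G_{2t},σ) is flow-admissible and admits a nowhere-zero 4-flow but admits no nowhere-zero 3-flow. -/

import Mathlib

/-!
Basic framework: finite signed multigraphs given by half-edge incidence,
orientations (bidirections), integer and group-valued flows.
-/

structure SignedGraph where
  V : Type
  E : Type
  fintypeV : Fintype V
  fintypeE : Fintype E
  decV : DecidableEq V
  decE : DecidableEq E
  /-- `ends e true` and `ends e false` are the two endpoints of the edge `e`
  (one for each of its two half-edges). -/
  ends : E → Bool → V
  /-- the signature, with values in `{1, -1}` -/
  sign : E → ℤ
  sign_unit : ∀ e, sign e = 1 ∨ sign e = -1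

attribute [instance] SignedGraph.fintypeV SignedGraph.fintypeE SignedGraph.decV SignedGraph.decE

namespace SignedGraph

variable (G : SignedGraph)

/-- the edge `e` joins the vertices `u` and `v` -/
def EdgeEnds (e : G.E) (u v : G.V) : Prop :=
  (G.ends e true = u ∧ G.ends e false = v) ∨ (G.ends e true = v ∧ G.ends e false = u)

def Adj (u v : G.V) : Prop := ∃ e, G.EdgeEnds e u v

def Reach : G.V → G.V → Prop := Relation.ReflTransGen G.Adj

/-- An orientation `τ` assigns `1` or `-1` to each half-edge `(e, b)`,
with the product of the two values on an edge equal to `-σ(e)`. -/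
def IsOrientation (τ : G.E → Bool → ℤ) : Prop :=
  (∀ e b, τ e b = 1 ∨ τ e b = -1) ∧ ∀ e, τ e true * τ e false = -G.sign e

/-- `f : E → A` is an `A`-flow with respect to the orientation `τ`:
at every vertex the signed values on incident half-edges sum to zero. -/
def IsFlow {A : Type} [AddCommGroup A] (τ : G.E → Bool → ℤ) (f : G.E → A) : Prop :=
  G.IsOrientation τ ∧
    ∀ v : G.V, (∑ e : G.E, ∑ b : Bool, if G.ends e b = v then τ e b • f e else 0) = 0

/-- an integer `k`-flow -/
def IsIntFlow (k : ℤ) (τ : G.E → Bool → ℤ) (f : G.E → ℤ) : Prop :=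
  G.IsFlow τ f ∧ ∀ e, |f e| < k

def NowhereZero {A : Type} [Zero A] (f : G.E → A) : Prop := ∀ e, f e ≠ 0

/-- `(G,σ)` admits a nowhere-zero integer `k`-flow -/
def HasNZFlow (k : ℤ) : Prop := ∃ τ f, G.IsIntFlow k τ f ∧ G.NowhereZero f

def FlowAdmissible : Prop := ∃ k : ℤ, 0 < k ∧ G.HasNZFlow k

def Connected : Prop := Nonempty G.V ∧ ∀ u v : G.V, G.Reach u v

/-- a circuit of length `n`, as a cyclic sequence of distinct vertices and distinct edges -/
def IsCircuit (n : ℕ) (v : Fin n → G.V) (e : Fin n → G.E) : Prop :=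
  0 < n ∧ Function.Injective v ∧ Function.Injective e ∧
    ∀ i : Fin n, G.EdgeEnds (e i) (v i) (v (finRotate n i))

/-- a circuit with an even number of negative edges -/
def BalancedCircuit (n : ℕ) (v : Fin n → G.V) (e : Fin n → G.E) : Prop :=
  G.IsCircuit n v e ∧ (∏ i, G.sign (e i)) = 1

def UnbalancedCircuit (n : ℕ) (v : Fin n → G.V) (e : Fin n → G.E) : Prop :=
  G.IsCircuit n v e ∧ (∏ i, G.sign (e i)) = -1

/-- a path with `n` edges and `n+1` distinct vertices -/
def IsPath (n : ℕ) (v : Fin (n + 1) → G.V) (e : Fin n → G.E) : Prop :=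
  Function.Injective v ∧ Function.Injective e ∧
    ∀ i : Fin n, G.EdgeEnds (e i) (v i.castSucc) (v i.succ)

/-- two edges with the same pair of endpoints -/
def Parallel (e e' : G.E) : Prop := ∃ u v, G.EdgeEnds e u v ∧ G.EdgeEnds e' u v

/-- `T` is the edge set of a triangle -/
def IsTriangle (T : Finset G.E) : Prop :=
  ∃ (a b c : G.V) (e1 e2 e3 : G.E),
    a ≠ b ∧ b ≠ c ∧ a ≠ c ∧ e1 ≠ e2 ∧ e2 ≠ e3 ∧ e1 ≠ e3 ∧
    T = {e1, e2, e3} ∧ G.EdgeEnds e1 a b ∧ G.EdgeEnds e2 b c ∧ G.EdgeEnds e3 a c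

def BalancedTriangle (T : Finset G.E) : Prop :=
  G.IsTriangle T ∧ (∏ e ∈ T, G.sign e) = 1

def UnbalancedTriangle (T : Finset G.E) : Prop :=
  G.IsTriangle T ∧ (∏ e ∈ T, G.sign e) = -1

/-- a triangle-path `T₁T₂⋯T_m` (each triangle given by its edge set) -/
def IsTrianglePath (m : ℕ) (T : Fin m → Finset G.E) : Prop :=
  0 < m ∧ (∀ i, G.IsTriangle (T i)) ∧ Function.Injective T ∧
    (∀ i j : Fin m, j.val = i.val + 1 → (T i ∩ T j).card = 1) ∧
    (∀ i j : Fin m, i.val + 1 < j.val → T i ∩ T j = ∅)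

def TriangularlyConnected : Prop :=
  G.Connected ∧ ∀ e e' : G.E, ¬G.Parallel e e' →
    ∃ (m : ℕ) (T : Fin m → Finset G.E) (hm : 0 < m),
      G.IsTrianglePath m T ∧ e ∈ T ⟨0, hm⟩ ∧ e' ∈ T ⟨m - 1, Nat.sub_lt hm one_pos⟩

/-- adjacency in the graph obtained by deleting the edges in `F` -/
def AdjAvoid (F : Set G.E) (u v : G.V) : Prop := ∃ e, e ∉ F ∧ G.EdgeEnds e u v

/-- reachability in the graph obtained by deleting the edges in `F` -/
def ReachAvoid (F : Set G.E) : G.V → G.V → Prop := Relation.ReflTransGen (G.AdjAvoid F)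

/-- `b` is a bridge (cut-edge) of `G` -/
def IsBridge (b : G.E) : Prop := ¬G.ReachAvoid {b} (G.ends b true) (G.ends b false)

/-- `b` is a bridge of the graph `G - F` -/
def IsBridgeAvoid (F : Set G.E) (b : G.E) : Prop :=
  b ∉ F ∧ ¬G.ReachAvoid (F ∪ {b}) (G.ends b true) (G.ends b false)

/-- degree of a vertex: the number of half-edges at it (loops counted twice) -/
def deg (v : G.V) : ℕ :=
  (Finset.univ.filter fun p : G.E × Bool => G.ends p.1 p.2 = v).card

/-- degree of a vertex in `G - F` -/
def degAvoid (F : Finset G.E) (v : G.V) : ℕ :=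
  (Finset.univ.filter fun p : G.E × Bool => p.1 ∉ F ∧ G.ends p.1 p.2 = v).card

/-- two edge-disjoint unbalanced circuits meeting at exactly one vertex -/
def ShortBarbell (n1 n2 : ℕ) (v1 : Fin n1 → G.V) (e1 : Fin n1 → G.E)
    (v2 : Fin n2 → G.V) (e2 : Fin n2 → G.E) : Prop :=
  G.UnbalancedCircuit n1 v1 e1 ∧ G.UnbalancedCircuit n2 v2 e2 ∧
    Set.range e1 ∩ Set.range e2 = ∅ ∧ ∃ w, Set.range v1 ∩ Set.range v2 = {w}

/-- two vertex-disjoint unbalanced circuits joined by a path with at least one edge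
meeting the circuits only at its endpoints -/
def LongBarbell (n1 n2 p : ℕ) (v1 : Fin n1 → G.V) (e1 : Fin n1 → G.E)
    (v2 : Fin n2 → G.V) (e2 : Fin n2 → G.E)
    (vp : Fin (p + 1) → G.V) (ep : Fin p → G.E) : Prop :=
  G.UnbalancedCircuit n1 v1 e1 ∧ G.UnbalancedCircuit n2 v2 e2 ∧
    0 < p ∧ G.IsPath p vp ep ∧
    Set.range v1 ∩ Set.range v2 = ∅ ∧
    vp 0 ∈ Set.range v1 ∧ vp (Fin.last p) ∈ Set.range v2 ∧
    (∀ i : Fin (p + 1), i ≠ 0 → vp i ∉ Set.range v1) ∧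
    (∀ i : Fin (p + 1), i ≠ Fin.last p → vp i ∉ Set.range v2) ∧
    Set.range ep ∩ Set.range e1 = ∅ ∧ Set.range ep ∩ Set.range e2 = ∅

end SignedGraph

namespace SignedGraph

/-- The signed graph `(G_{2t}, σ)` of Section 4 (vertices `Sum.inl i = x_{i+1}`,
`Sum.inr i = y_{i+1}`).  Edges: `.inl i` is `x_{i+1}x_{i+2}` (indices mod `t`),
`.inr (.inl i)` is `y_{i+1}y_{i+2}`, `.inr (.inr (.inl i))` is `y_{i+1}x_{i+1}` and
`.inr (.inr (.inr i))` is `y_{i+1}x_{i+2}`.  Negative edges: `x₁x₂`, `y₁y₂` and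
all edges `yᵢxᵢ`, `yᵢx_{i+1}` except `y₁x₂`. -/
def Gdbl (t : ℕ) : SignedGraph where
  V := Fin t ⊕ Fin t
  E := Fin t ⊕ (Fin t ⊕ (Fin t ⊕ Fin t))
  fintypeV := inferInstance
  fintypeE := inferInstance
  decV := inferInstance
  decE := inferInstance
  ends := fun e b =>
    match e with
    | Sum.inl i =>
        if b then Sum.inl i else Sum.inl ⟨(i.val + 1) % t, Nat.mod_lt _ i.pos⟩
    | Sum.inr (Sum.inl i) =>
        if b then Sum.inr i else Sum.inr ⟨(i.val + 1) % t, Nat.mod_lt _ i.pos⟩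
    | Sum.inr (Sum.inr (Sum.inl i)) =>
        if b then Sum.inr i else Sum.inl i
    | Sum.inr (Sum.inr (Sum.inr i)) =>
        if b then Sum.inr i else Sum.inl ⟨(i.val + 1) % t, Nat.mod_lt _ i.pos⟩
  sign := fun e =>
    match e with
    | Sum.inl i => if i.val = 0 then -1 else 1
    | Sum.inr (Sum.inl i) => if i.val = 0 then -1 else 1
    | Sum.inr (Sum.inr (Sum.inl _)) => -1
    | Sum.inr (Sum.inr (Sum.inr i)) => if i.val = 0 then 1 else -1
  sign_unit := by
    rintro (i | i | i | i) <;> dsimp only <;>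
      first
        | (split_ifs <;> simp)
        | simp

end SignedGraph


section Helpers
open SignedGraph

variable {t : ℕ} [NeZero t]

instance instDecEqGdblV (t : ℕ) (a : (Gdbl t).V) (b : Fin t ⊕ Fin t) :
    Decidable (@Eq (Gdbl t).V a b) := (Gdbl t).decV a b

lemma mod_add_one (ht : 2 ≤ t) (i : Fin t) :
    (⟨(i.val + 1) % t, Nat.mod_lt _ i.pos⟩ : Fin t) = i + 1 := by
  apply Fin.ext
  simp [Fin.add_def, Nat.mod_eq_of_lt (show 1 < t by omega)]

lemma add_one_eq_iff (i j : Fin t) : (i + 1 = j) ↔ i = j - 1 := by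
  exact (eq_sub_iff_add_eq).symm

lemma sum_eval_inl (ht : 2 ≤ t) (F : (Gdbl t).E → Bool → ℤ) (j : Fin t) :
    (∑ e : (Gdbl t).E, ∑ b : Bool, if (Gdbl t).ends e b = Sum.inl j then F e b else 0)
    = F (Sum.inl j) true + F (Sum.inl (j-1)) false
      + F (Sum.inr (Sum.inr (Sum.inl j))) false
      + F (Sum.inr (Sum.inr (Sum.inr (j-1)))) false := by
  show (∑ e : Fin t ⊕ (Fin t ⊕ (Fin t ⊕ Fin t)), ∑ b : Bool,
      if (Gdbl t).ends e b = Sum.inl j then F e b else 0) = _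
  rw [Fintype.sum_sum_type, Fintype.sum_sum_type, Fintype.sum_sum_type]
  simp only [Fintype.sum_bool, Gdbl, mod_add_one ht, Sum.inl.injEq, add_one_eq_iff,
    reduceCtorEq, if_false, if_true]
  simp [Finset.sum_add_distrib, Finset.sum_ite_eq']
  ring

lemma sum_eval_inr (ht : 2 ≤ t) (F : (Gdbl t).E → Bool → ℤ) (j : Fin t) :
    (∑ e : (Gdbl t).E, ∑ b : Bool, if (Gdbl t).ends e b = Sum.inr j then F e b else 0)
    = F (Sum.inr (Sum.inl j)) true + F (Sum.inr (Sum.inl (j-1))) false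
      + F (Sum.inr (Sum.inr (Sum.inl j))) true
      + F (Sum.inr (Sum.inr (Sum.inr j))) true := by
  show (∑ e : Fin t ⊕ (Fin t ⊕ (Fin t ⊕ Fin t)), ∑ b : Bool,
      if (Gdbl t).ends e b = Sum.inr j then F e b else 0) = _
  rw [Fintype.sum_sum_type, Fintype.sum_sum_type, Fintype.sum_sum_type]
  simp only [Fintype.sum_bool, Gdbl, mod_add_one ht, Sum.inr.injEq, add_one_eq_iff,
    reduceCtorEq, if_false, if_true]
  simp [Finset.sum_add_distrib, Finset.sum_ite_eq']
  ring

/-- the orientation for the 4-flow -/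
def tau4 (t : ℕ) : (Gdbl t).E → Bool → ℤ := fun e b =>
  match e with
  | Sum.inl i => if b then 1 else (if i.val = 0 then 1 else -1)
  | Sum.inr (Sum.inl i) => if b then (if i.val = 0 then -1 else 1) else -1
  | Sum.inr (Sum.inr (Sum.inl _)) => -1
  | Sum.inr (Sum.inr (Sum.inr i)) => if b then 1 else (if i.val = 0 then -1 else 1)

/-- the values of the 4-flow -/
def f4 (t : ℕ) : (Gdbl t).E → ℤ := fun e =>
  match e with
  | Sum.inl _ => 2
  | Sum.inr (Sum.inl _) => 1
  | Sum.inr (Sum.inr (Sum.inl _)) => 1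
  | Sum.inr (Sum.inr (Sum.inr i)) => if i.val = 0 then 3 else 1

lemma tau4_or (t : ℕ) : (Gdbl t).IsOrientation (tau4 t) := by
  constructor
  · rintro (i | i | i | i) b <;> simp only [tau4] <;>
      first
      | (split_ifs <;> simp)
      | simp
  · rintro (i | i | i | i) <;>
      simp only [tau4, Gdbl, Bool.false_eq_true, if_true, if_false] <;>
      first
      | (split_ifs <;> norm_num)
      | norm_num

lemma four_flow (t : ℕ) [NeZero t] (ht : 2 ≤ t) :
    (Gdbl t).IsIntFlow 4 (tau4 t) (f4 t) := by
  refine ⟨⟨tau4_or t, ?_⟩, ?_⟩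
  · rintro (j | j)
    · rw [show (∑ e : (Gdbl t).E, ∑ b : Bool,
          if (Gdbl t).ends e b = Sum.inl j then tau4 t e b • f4 t e else 0)
        = _ from sum_eval_inl ht (fun e b => tau4 t e b • f4 t e) j]
      simp only [tau4, f4, smul_eq_mul]
      by_cases h : (j - 1).val = 0 <;> simp [h]
    · rw [show (∑ e : (Gdbl t).E, ∑ b : Bool,
          if (Gdbl t).ends e b = Sum.inr j then tau4 t e b • f4 t e else 0)
        = _ from sum_eval_inr ht (fun e b => tau4 t e b • f4 t e) j]
      simp only [tau4, f4, smul_eq_mul]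
      by_cases h : j.val = 0 <;> simp [h]
  · rintro (i | i | i | i) <;> simp only [f4] <;>
      first | (split_ifs <;> norm_num) | norm_num

lemma four_nz (t : ℕ) : (Gdbl t).NowhereZero (f4 t) := by
  rintro (i | i | i | i) <;> simp only [f4] <;>
      first | (split_ifs <;> norm_num) | norm_num


lemma sum_fin_ite (t : ℕ) [NeZero t] (a b : ℤ) :
    ∑ i : Fin t, (if i.val = 0 then a else b) = a + ((t : ℤ) - 1) * b := by
  have h : ∀ i : Fin t, (if i.val = 0 then a else b) = (if i = 0 then (a - b) else 0) + b := by
    intro i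
    have h2 : (i = 0) ↔ (i.val = 0) := Fin.val_eq_zero_iff.symm
    rcases Decidable.em (i.val = 0) with h | h <;> simp [h, h2]
  rw [Finset.sum_congr rfl (fun i _ => h i), Finset.sum_add_distrib,
    Finset.sum_ite_eq' Finset.univ (0 : Fin t)]
  simp [Finset.card_univ, mul_comm]
  ring

lemma pm_mul {a b : ℤ} (ha : a = 1 ∨ a = -1) (hb : b = 1 ∨ b = -1) :
    a * b = 1 ∨ a * b = -1 := by
  rcases ha with h | h <;> rcases hb with h' | h' <;> simp [h, h']

lemma edge_contrib {a b c σ : ℤ} (ha : a = 1 ∨ a = -1) (hb : b = 1 ∨ b = -1)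
    (hc : c = 1 ∨ c = -1) (h : a * b = -σ) :
    (4 : ℤ) ∣ (a * c + b * c) - (1 - σ) := by
  rcases ha with h1 | h1 <;> rcases hb with h2 | h2 <;> rcases hc with h3 | h3 <;>
    subst h1 <;> subst h2 <;> subst h3 <;> omega

lemma four_term {A1 A2 A3 A4 B1 B2 B3 B4 : ℤ}
    (h0 : B1 + B2 + B3 + B4 = 0)
    (p1 : A1 = 1 ∨ A1 = -1) (p2 : A2 = 1 ∨ A2 = -1)
    (p3 : A3 = 1 ∨ A3 = -1) (p4 : A4 = 1 ∨ A4 = -1)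
    (q1 : (3:ℤ) ∣ B1 - A1) (q2 : (3:ℤ) ∣ B2 - A2)
    (q3 : (3:ℤ) ∣ B3 - A3) (q4 : (3:ℤ) ∣ B4 - A4) :
    A1 + A2 + A3 + A4 = 0 := by
  rcases p1 with h | h <;> rcases p2 with ha | ha <;> rcases p3 with hb | hb <;>
    rcases p4 with hc | hc <;> omega

lemma sum_sign (t : ℕ) [NeZero t] : ∑ e : (Gdbl t).E, (Gdbl t).sign e = -2 := by
  show (∑ e : Fin t ⊕ (Fin t ⊕ (Fin t ⊕ Fin t)), (Gdbl t).sign e) = -2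
  erw [Fintype.sum_sum_type, Fintype.sum_sum_type, Fintype.sum_sum_type]
  simp only [Gdbl]
  rw [sum_fin_ite, sum_fin_ite]
  simp [Finset.sum_const, Finset.card_univ]
  ring

lemma card_E (t : ℕ) : Fintype.card ((Gdbl t).E) = 4 * t := by
  show Fintype.card (Fin t ⊕ (Fin t ⊕ (Fin t ⊕ Fin t))) = 4 * t
  simp [Fintype.card_sum]
  ring

lemma no_three (t : ℕ) (ht : 4 ≤ t) : ¬ (Gdbl t).HasNZFlow 3 := by
  haveI : NeZero t := ⟨by omega⟩
  have ht2 : 2 ≤ t := by omega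
  rintro ⟨τ, f, ⟨⟨⟨⟨hunit, hprod⟩, hflow⟩, hbd⟩, hnz⟩⟩
  set s : (Gdbl t).E → ℤ := fun e => if f e % 3 = 1 then 1 else -1 with hs_def
  have hs : ∀ e, (s e = 1 ∨ s e = -1) ∧ (3 : ℤ) ∣ f e - s e := by
    intro e
    have h1 := hbd e; have h2 := hnz e
    rw [abs_lt] at h1
    simp only [hs_def]
    split <;> constructor <;> omega
  have key : ∀ (e : (Gdbl t).E) (b : Bool),
      (τ e b * s e = 1 ∨ τ e b * s e = -1) ∧
      (3:ℤ) ∣ τ e b * f e - τ e b * s e := by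
    intro e b
    refine ⟨pm_mul (hunit e b) (hs e).1, ?_⟩
    rw [← mul_sub]
    exact Dvd.dvd.mul_left (hs e).2 _
  have hS : ∀ v, (∑ e : (Gdbl t).E, ∑ b : Bool,
      if (Gdbl t).ends e b = v then τ e b * s e else 0) = 0 := by
    rintro (j | j)
    · have h0 := hflow (Sum.inl j)
      simp only [smul_eq_mul] at h0
      rw [sum_eval_inl ht2 (fun e b => τ e b * f e) j] at h0
      rw [sum_eval_inl ht2 (fun e b => τ e b * s e) j]
      exact four_term h0 (key _ _).1 (key _ _).1 (key _ _).1 (key _ _).1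
        (key _ _).2 (key _ _).2 (key _ _).2 (key _ _).2
    · have h0 := hflow (Sum.inr j)
      simp only [smul_eq_mul] at h0
      rw [sum_eval_inr ht2 (fun e b => τ e b * f e) j] at h0
      rw [sum_eval_inr ht2 (fun e b => τ e b * s e) j]
      exact four_term h0 (key _ _).1 (key _ _).1 (key _ _).1 (key _ _).1
        (key _ _).2 (key _ _).2 (key _ _).2 (key _ _).2
  have h2 : ∀ (e : (Gdbl t).E) (b : Bool),
      ∑ v : (Gdbl t).V, (if (Gdbl t).ends e b = v then τ e b * s e else 0)
      = τ e b * s e := by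
    intro e b
    rw [Finset.sum_ite_eq]
    simp
  have hglobal : ∑ e : (Gdbl t).E, (τ e true * s e + τ e false * s e) = 0 := by
    have h1 : ∑ v : (Gdbl t).V, (∑ e : (Gdbl t).E, ∑ b : Bool,
        if (Gdbl t).ends e b = v then τ e b * s e else 0) = 0 := by
      rw [Finset.sum_congr rfl (fun v _ => hS v)]
      simp
    rw [Finset.sum_comm] at h1
    have h3 : ∀ e : (Gdbl t).E, (∑ v : (Gdbl t).V, ∑ b : Bool,
        if (Gdbl t).ends e b = v then τ e b * s e else 0)
        = τ e true * s e + τ e false * s e := by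
      intro e
      rw [Finset.sum_comm]
      rw [Finset.sum_congr rfl (fun b _ => h2 e b)]
      simp [Fintype.sum_bool]
    rw [Finset.sum_congr rfl (fun e _ => h3 e)] at h1
    exact h1
  have hdvd : (4:ℤ) ∣ ∑ e : (Gdbl t).E,
      ((τ e true * s e + τ e false * s e) - (1 - (Gdbl t).sign e)) :=
    Finset.dvd_sum fun e _ =>
      edge_contrib (hunit e true) (hunit e false) (hs e).1 (hprod e)
  rw [Finset.sum_sub_distrib, hglobal, Finset.sum_sub_distrib, sum_sign] at hdvd
  simp only [Finset.sum_const, Finset.card_univ, card_E, nsmul_eq_mul, mul_one] at hdvd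
  omega

end Helpers

open SignedGraph in
/-- For every `t ≥ 4`, `(G_{2t},σ)` is flow-admissible and admits a
nowhere-zero 4-flow but no nowhere-zero 3-flow. -/
theorem Gdbl_four_flow_no_three_flow :
    ∀ t : ℕ, 4 ≤ t →
      (Gdbl t).FlowAdmissible ∧ (Gdbl t).HasNZFlow 4 ∧ ¬ (Gdbl t).HasNZFlow 3 := by
  intro t ht
  haveI : NeZero t := ⟨by omega⟩
  have h4 : (Gdbl t).HasNZFlow 4 := ⟨tau4 t, f4 t, four_flow t (by omega), four_nz t⟩
  exact ⟨⟨4, by norm_num, h4⟩, h4, no_three t ht⟩
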